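/- Let β > 0 and let (a_n)_{n≥1} be a sequence of positive real numbers such that a_1 < (1 + 1/β)^{−1/β} and a_{n+1} ≤ a_n − a_n^{1+β}/β for all n ≥ 1. Then a_n ≤ (a_1^{−β} + n − 1)^{−1/β} for all n ≥ 1. -/
import Mathlib

/-- Key inequality: for `0 < x < 1` and `β > 0`, `1 + β*x ≤ (1-x)^(-β)`. -/
lemma aux_bernoulli (β x : ℝ) (hβ : 0 < β) (hx : 0 < x) (hx1 : x < 1) :
    1 + β * x ≤ (1 - x) ^ (-β) := by
  have h1x : 0 < 1 - x := by linarith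
  have hlog1 : Real.log (1 + β * x) ≤ β * x :=
    le_trans (Real.log_le_sub_one_of_pos (by positivity)) (by linarith)
  have hlog2 : Real.log (1 - x) ≤ -x :=
    le_trans (Real.log_le_sub_one_of_pos h1x) (by linarith)
  have hmul := mul_le_mul_of_nonneg_left hlog2 hβ.le
  have h3 : Real.log (1 + β * x) ≤ Real.log (1 - x) * (-β) := by nlinarith [hmul]
  calc 1 + β * x = Real.exp (Real.log (1 + β * x)) :=
        (Real.exp_log (by positivity)).symm
    _ ≤ Real.exp (Real.log (1 - x) * (-β)) := Real.exp_le_exp.mpr h3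
    _ = (1 - x) ^ (-β) := (Real.rpow_def_of_pos h1x _).symm

/-- Let `β > 0` and `(a_n)_{n ≥ 1}` be positive reals with
`a_1 < (1 + 1/β)^{-1/β}` and `a_{n+1} ≤ a_n - a_n^{1+β}/β` for all `n ≥ 1`.
Then `a_n ≤ (a_1^{-β} + n - 1)^{-1/β}` for all `n ≥ 1`. -/
theorem stmt10 (β : ℝ) (hβ : 0 < β) (a : ℕ → ℝ)
    (hpos : ∀ n : ℕ, 1 ≤ n → 0 < a n)
    (ha1 : a 1 < (1 + 1 / β) ^ (-1 / β))
    (hrec : ∀ n : ℕ, 1 ≤ n → a (n + 1) ≤ a n - a n ^ (1 + β) / β) :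
    ∀ n : ℕ, 1 ≤ n → a n ≤ (a 1 ^ (-β) + (n : ℝ) - 1) ^ (-1 / β) := by
  have ha1pos : 0 < a 1 := hpos 1 le_rfl
  set b : ℝ := a 1 ^ (-β) with hb
  have hbpos : 0 < b := Real.rpow_pos_of_pos ha1pos _
  have hcpos : 0 < (1 + 1 / β : ℝ) := by positivity
  -- b > 1 + 1/β
  have hbgt : 1 + 1 / β < b := by
    calc 1 + 1 / β = ((1 + 1 / β) ^ (-1 / β)) ^ (-β) := by
          rw [← Real.rpow_mul hcpos.le]
          rw [show (-1 / β) * (-β) = 1 by field_simp, Real.rpow_one]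
      _ < b := Real.rpow_lt_rpow_of_neg ha1pos ha1 (by linarith : -β < 0)
  -- main induction
  intro n hn
  induction n with
  | zero => omega
  | succ m ih =>
    rcases Nat.eq_or_lt_of_le hn with h1 | h1
    · -- base case: m + 1 = 1
      have hm : m = 0 := by omega
      subst hm
      norm_num
      rw [hb, ← Real.rpow_mul ha1pos.le,
        show (-β) * (-1 / β) = 1 by field_simp, Real.rpow_one]
  -- inductive step
    · have hm1 : 1 ≤ m := by omega
      have IH := ih hm1
      have ham : 0 < a m := hpos m hm1
      have hspos : 0 < b + (m : ℝ) - 1 := by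
        have : (1 : ℝ) ≤ (m : ℝ) := by exact_mod_cast hm1
        linarith
      have hsgt : 1 + 1 / β ≤ b + (m : ℝ) - 1 := by
        have : (1 : ℝ) ≤ (m : ℝ) := by exact_mod_cast hm1
        linarith
      -- a m ^ β ≤ 1 / (b + m - 1)
      have hamβ : a m ^ β ≤ (b + (m : ℝ) - 1)⁻¹ := by
        calc a m ^ β ≤ ((b + (m : ℝ) - 1) ^ (-1 / β)) ^ β :=
              Real.rpow_le_rpow ham.le IH hβ.le
          _ = (b + (m : ℝ) - 1)⁻¹ := by
              rw [← Real.rpow_mul hspos.le,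
                show (-1 / β) * β = -1 by field_simp, Real.rpow_neg_one]
      have hamβpos : 0 < a m ^ β := Real.rpow_pos_of_pos ham _
      set x : ℝ := a m ^ β / β with hxdef
      have hxpos : 0 < x := by positivity
      have hx1 : x < 1 := by
        have hinv : (b + (m : ℝ) - 1)⁻¹ ≤ (1 + 1 / β)⁻¹ := by
          apply inv_anti₀ hcpos hsgt
        have hββ : β * (1 / β) = 1 := by field_simp
        have h2 : (1 + 1/β)⁻¹ < β := by
          rw [inv_lt_iff_one_lt_mul₀ hcpos]
          nlinarith [hββ]
        have : a m ^ β < β := lt_of_le_of_lt (hamβ.trans hinv) h2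
        rw [hxdef, div_lt_one hβ]
        exact this
      have h1x : 0 < 1 - x := by linarith
      -- rewrite recurrence
      have hrw : a m - a m ^ (1 + β) / β = a m * (1 - x) := by
        rw [Real.rpow_add ham, Real.rpow_one, hxdef]
        ring
      have hstep : a (m + 1) ≤ a m * (1 - x) := by
        rw [← hrw]; exact hrec m hm1
      have hm1pos : 0 < a (m + 1) := hpos (m + 1) (by omega)
      -- a(m+1)^(-β) ≥ a m^(-β) + 1
      have hkey : b + (m : ℝ) ≤ a (m + 1) ^ (-β) := by
        have h1 : (a m * (1 - x)) ^ (-β) ≤ a (m + 1) ^ (-β) :=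
          Real.rpow_le_rpow_of_nonpos (by positivity) hstep (by linarith)
        have h2 : (a m * (1 - x)) ^ (-β) = a m ^ (-β) * (1 - x) ^ (-β) :=
          Real.mul_rpow ham.le h1x.le
        have h3 : 1 + β * x ≤ (1 - x) ^ (-β) := aux_bernoulli β x hβ hxpos hx1
        have hβx : β * x = a m ^ β := by rw [hxdef]; field_simp
        have hmneg : 0 < a m ^ (-β) := Real.rpow_pos_of_pos ham _
        have h4 : a m ^ (-β) * (1 + a m ^ β) ≤ a m ^ (-β) * (1 - x) ^ (-β) := by
          apply mul_le_mul_of_nonneg_left _ hmneg.le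
          rwa [hβx] at h3
        have h5 : a m ^ (-β) * (1 + a m ^ β) = a m ^ (-β) + 1 := by
          rw [mul_add, mul_one, ← Real.rpow_add ham]
          simp
        -- a m ^ (-β) ≥ b + m - 1
        have h6 : b + (m : ℝ) - 1 ≤ a m ^ (-β) := by
          calc b + (m : ℝ) - 1
              = ((b + (m : ℝ) - 1) ^ (-1 / β)) ^ (-β) := by
                rw [← Real.rpow_mul hspos.le,
                  show (-1 / β) * (-β) = 1 by field_simp, Real.rpow_one]
            _ ≤ a m ^ (-β) :=
                Real.rpow_le_rpow_of_nonpos ham IH (by linarith)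
        calc b + (m : ℝ) ≤ a m ^ (-β) + 1 := by linarith
          _ = a m ^ (-β) * (1 + a m ^ β) := h5.symm
          _ ≤ a m ^ (-β) * (1 - x) ^ (-β) := h4
          _ = (a m * (1 - x)) ^ (-β) := h2.symm
          _ ≤ a (m + 1) ^ (-β) := h1
      -- conclude
      have htpos : 0 < b + ((m : ℝ) + 1) - 1 := by linarith
      have : (b + ((m : ℝ) + 1) - 1) = b + (m : ℝ) := by ring
      rw [Nat.cast_add, Nat.cast_one, this]
      calc a (m + 1)
          = (a (m + 1) ^ (-β)) ^ (-1 / β) := by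
            rw [← Real.rpow_mul hm1pos.le,
              show (-β) * (-1 / β) = 1 by field_simp, Real.rpow_one]
        _ ≤ (b + (m : ℝ)) ^ (-1 / β) := by
            apply Real.rpow_le_rpow_of_nonpos (by linarith) hkey
            apply div_nonpos_of_nonpos_of_nonneg <;> linarith
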